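/- For any estimators ŵ_i with E[ŵ_i] = w_i, and any 1 ≤ m ≤ n with n ≥ 2, the average variance over uniform m-subsets satisfies V_m ≥ m·((n−m)/(n−1))·V_1, where V_m = E_{|I|=m}[Var[ŵ_I]] and V_1 = (1/n)∑_i Var[ŵ_i]. In particular, no matter how negative the covariances are, the average variance is reduced by at most a factor (n−1)/(n−m) relative to m·V_1. -/

import Mathlib

open MeasureTheory ProbabilityTheory Finset

lemma avg_var_count_subset {α : Type*} [DecidableEq α] (s t : Finset α) (ht : t ⊆ s) (k : ℕ)
    (hk : t.card ≤ k) :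
    ((s.powersetCard k).filter (fun I => t ⊆ I)).card = (s.card - t.card).choose (k - t.card) := by
  rw [← Finset.card_sdiff_of_subset ht, ← Finset.card_powersetCard]
  apply Finset.card_nbij' (fun I => I \ t) (fun J => J ∪ t)
  · intro I hI
    simp only [mem_coe, mem_filter, mem_powersetCard] at hI
    rcases hI with ⟨⟨hIs, hIc⟩, htI⟩
    rw [mem_coe, mem_powersetCard]
    exact ⟨sdiff_subset_sdiff hIs (le_refl t), by rw [card_sdiff_of_subset htI, hIc]⟩
  · intro J hJ
    rw [mem_coe, mem_powersetCard] at hJ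
    rcases hJ with ⟨hJs, hJc⟩
    have hdisj : Disjoint J t := (Finset.sdiff_disjoint.mono_left hJs)
    simp only [mem_coe, mem_filter, mem_powersetCard]
    refine ⟨⟨union_subset (hJs.trans sdiff_subset) ht, ?_⟩, subset_union_right⟩
    rw [card_union_of_disjoint hdisj, hJc, Nat.sub_add_cancel hk]
  · intro I hI
    simp only [mem_coe, mem_filter, mem_powersetCard] at hI
    exact sdiff_union_of_subset hI.2
  · intro J hJ
    rw [mem_coe, mem_powersetCard] at hJ
    have hdisj : Disjoint J t := (Finset.sdiff_disjoint.mono_left hJ.1)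
    dsimp only
    rw [union_sdiff_right, sdiff_eq_self_of_disjoint hdisj]

lemma avg_var_prod_integrable {Ω : Type*} [MeasurableSpace Ω] (μ : Measure Ω)
    [IsProbabilityMeasure μ] {f g : Ω → ℝ} (hf : MemLp f 2 μ) (hg : MemLp g 2 μ) :
    Integrable (fun ω => f ω * g ω) μ := by
  have h : MemLp (f • g) 1 μ := hg.smul hf
  exact memLp_one_iff_integrable.mp h

lemma avg_var_variance_sum {Ω : Type*} [MeasurableSpace Ω] (μ : Measure Ω)
    [IsProbabilityMeasure μ]
    (n : ℕ) (w : Fin n → ℝ) (what : Fin n → Ω → ℝ)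
    (hL2 : ∀ i, MemLp (what i) 2 μ)
    (hunb : ∀ i, ∫ ω, what i ω ∂μ = w i) (I : Finset (Fin n)) :
    variance (fun ω => ∑ i ∈ I, what i ω) μ
      = ∑ i ∈ I, ∑ j ∈ I, ∫ ω, (what i ω - w i) * (what j ω - w j) ∂μ := by
  have hint : ∀ i : Fin n, Integrable (what i) μ := fun i => (hL2 i).integrable one_le_two
  have hsum : MemLp (fun ω => ∑ i ∈ I, what i ω) 2 μ := by
    have h := memLp_finset_sum' I (fun i (_ : i ∈ I) => hL2 i)
    have he : (∑ i ∈ I, what i) = fun ω => ∑ i ∈ I, what i ω := by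
      funext ω; simp
    rwa [he] at h
  have hmean : (∫ ω, ∑ i ∈ I, what i ω ∂μ) = ∑ i ∈ I, w i := by
    rw [integral_finset_sum I (fun i _ => hint i)]
    exact Finset.sum_congr rfl fun i _ => hunb i
  rw [variance_eq_integral hsum.aemeasurable]
  change ∫ ω, ((((fun ω => ∑ i ∈ I, what i ω) - fun _ => ∫ ω, ∑ i ∈ I, what i ω ∂μ) ^ (2:ℕ) : Ω → ℝ) ω) ∂μ = _
  have heq : ((fun ω => ∑ i ∈ I, what i ω) - fun _ => ∫ ω, ∑ i ∈ I, what i ω ∂μ) ^ (2:ℕ)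
      = fun ω => ∑ i ∈ I, ∑ j ∈ I, (what i ω - w i) * (what j ω - w j) := by
    funext ω
    simp only [Pi.pow_apply, Pi.sub_apply, hmean, ← Finset.sum_sub_distrib]
    rw [sq, Finset.sum_mul_sum]
  rw [heq, integral_finset_sum I (fun i _ => ?_)]
  · exact Finset.sum_congr rfl fun i _ => integral_finset_sum I (fun j _ =>
      avg_var_prod_integrable μ ((hL2 i).sub (memLp_const (w i))) ((hL2 j).sub (memLp_const (w j))))
  · exact integrable_finset_sum I (fun j _ =>
      avg_var_prod_integrable μ ((hL2 i).sub (memLp_const (w i))) ((hL2 j).sub (memLp_const (w j))))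

lemma avg_var_nat_id (n m : ℕ) (h1 : 1 ≤ m) (h2 : m ≤ n) :
    n * (n-1).choose (m-1) = n.choose m * m := by
  obtain ⟨n', rfl⟩ := Nat.exists_eq_add_of_le (h1.trans h2)
  obtain ⟨m', rfl⟩ := Nat.exists_eq_add_of_le h1
  simpa [Nat.add_comm] using Nat.add_one_mul_choose_eq n' m'

/-- No matter how negative the covariances are, the average variance `V_m` over
uniform `m`-subsets satisfies `V_m ≥ m·((n−m)/(n−1))·V_1`, where
`V_1 = (1/n)·∑ᵢ Var[what i]`. -/
theorem avg_variance_lower_bound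
    {Ω : Type*} [MeasurableSpace Ω] (μ : Measure Ω) [IsProbabilityMeasure μ]
    (n m : ℕ) (hn : 2 ≤ n) (hm1 : 1 ≤ m) (hmn : m ≤ n)
    (w : Fin n → ℝ) (what : Fin n → Ω → ℝ)
    (hL2 : ∀ i, MemLp (what i) 2 μ)
    (hunb : ∀ i, ∫ ω, what i ω ∂μ = w i) :
    (∑ I ∈ (Finset.univ : Finset (Fin n)).powersetCard m,
        variance (fun ω => ∑ i ∈ I, what i ω) μ) / (n.choose m : ℝ)
      ≥ (m : ℝ) * (((n : ℝ) - m) / ((n : ℝ) - 1)) *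
          ((∑ i, variance (what i) μ) / n) := by
  classical
  set C : Fin n → Fin n → ℝ :=
    fun i j => ∫ ω, (what i ω - w i) * (what j ω - w j) ∂μ with hC
  have hvar : ∀ I : Finset (Fin n),
      variance (fun ω => ∑ i ∈ I, what i ω) μ = ∑ i ∈ I, ∑ j ∈ I, C i j :=
    fun I => avg_var_variance_sum μ n w what hL2 hunb I
  have hCii : ∀ i, C i i = variance (what i) μ := by
    intro i
    have h := hvar {i}
    simp only [Finset.sum_singleton] at h
    exact h.symm
  set S : ℝ := ∑ i, variance (what i) μ with hS
  set T : ℝ := ∑ i, ∑ j ∈ Finset.univ.erase i, C i j with hT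
  have hS0 : 0 ≤ S := Finset.sum_nonneg fun i _ => variance_nonneg _ _
  have hST : 0 ≤ S + T := by
    have h := hvar Finset.univ
    have h2 : ∑ i, ∑ j, C i j = S + T := by
      rw [hS, hT, ← Finset.sum_add_distrib]
      refine Finset.sum_congr rfl fun i _ => ?_
      rw [← hCii i, Finset.add_sum_erase _ _ (Finset.mem_univ i)]
    rw [h2] at h
    rw [← h]
    exact variance_nonneg _ _
  set P : Finset (Finset (Fin n)) := Finset.univ.powersetCard m with hP
  set A : ℝ := (((n-1).choose (m-1) : ℕ) : ℝ) with hA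
  set B : ℝ := if 1 < m then (((n-2).choose (m-2) : ℕ) : ℝ) else 0 with hB
  have hA0 : 0 ≤ A := by positivity
  have hB0 : 0 ≤ B := by rw [hB]; split <;> positivity
  -- counts
  have hcount_diag : ∀ i : Fin n,
      ((P.filter (fun I => i ∈ I ∧ i ∈ I)).card : ℝ) = A := by
    intro i
    rw [hA]
    norm_cast
    have := avg_var_count_subset (Finset.univ : Finset (Fin n)) {i} (by simp) m (by simpa)
    simp only [Finset.card_univ, Fintype.card_fin, Finset.card_singleton] at this
    rw [← this]
    congr 1
    apply Finset.filter_congr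
    intro I _
    simp [Finset.singleton_subset_iff]
  have hcount_off : ∀ i j : Fin n, i ≠ j →
      ((P.filter (fun I => i ∈ I ∧ j ∈ I)).card : ℝ) = B := by
    intro i j hij
    rcases lt_or_ge 1 m with hm2 | hm2
    · rw [hB, if_pos hm2]
      norm_cast
      have hcard : ({i, j} : Finset (Fin n)).card = 2 := Finset.card_pair hij
      have := avg_var_count_subset (Finset.univ : Finset (Fin n)) {i, j} (by simp) m
        (by rw [hcard]; omega)
      rw [Finset.card_univ, Fintype.card_fin, hcard] at this
      rw [← this]
      congr 1
      apply Finset.filter_congr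
      intro I _
      simp [Finset.insert_subset_iff, Finset.singleton_subset_iff]
    · have hm1' : m = 1 := le_antisymm hm2 hm1
      rw [hB, if_neg (by omega)]
      norm_cast
      rw [Finset.card_eq_zero, Finset.filter_eq_empty_iff]
      intro I hI
      rw [hP, Finset.mem_powersetCard] at hI
      rintro ⟨hiI, hjI⟩
      have : 1 < I.card := Finset.one_lt_card.mpr ⟨i, hiI, j, hjI, hij⟩
      omega
  -- the rearranged numerator
  have hnum : ∑ I ∈ P, variance (fun ω => ∑ i ∈ I, what i ω) μ = A * S + B * T := by
    calc ∑ I ∈ P, variance (fun ω => ∑ i ∈ I, what i ω) μ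
        = ∑ I ∈ P, ∑ p ∈ (Finset.univ ×ˢ Finset.univ : Finset (Fin n × Fin n)),
            if p ∈ I ×ˢ I then C p.1 p.2 else 0 := by
          refine Finset.sum_congr rfl fun I _ => ?_
          rw [hvar I, Finset.sum_ite_mem, Finset.univ_product_univ, Finset.univ_inter, Finset.sum_product]
      _ = ∑ p ∈ (Finset.univ ×ˢ Finset.univ : Finset (Fin n × Fin n)),
            ∑ I ∈ P, if p ∈ I ×ˢ I then C p.1 p.2 else 0 := Finset.sum_comm
      _ = ∑ p ∈ (Finset.univ ×ˢ Finset.univ : Finset (Fin n × Fin n)),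
            ((P.filter (fun I => p.1 ∈ I ∧ p.2 ∈ I)).card : ℝ) * C p.1 p.2 := by
          refine Finset.sum_congr rfl fun p _ => ?_
          simp only [Finset.mem_product]
          rw [Finset.sum_ite, Finset.sum_const, Finset.sum_const_zero, add_zero, nsmul_eq_mul]
      _ = ∑ i : Fin n, ∑ j : Fin n,
            ((P.filter (fun I => i ∈ I ∧ j ∈ I)).card : ℝ) * C i j := by
          rw [Finset.sum_product]
      _ = ∑ i : Fin n, (A * C i i + ∑ j ∈ Finset.univ.erase i, B * C i j) := by
          refine Finset.sum_congr rfl fun i _ => ?_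
          rw [← Finset.add_sum_erase _ _ (Finset.mem_univ i), hcount_diag i]
          congr 1
          refine Finset.sum_congr rfl fun j hj => ?_
          rw [hcount_off i j (Ne.symm (Finset.ne_of_mem_erase hj))]
      _ = A * S + B * T := by
          rw [Finset.sum_add_distrib]
          congr 1
          · rw [← Finset.mul_sum, hS]
            congr 1
            exact Finset.sum_congr rfl fun i _ => hCii i
          · rw [hT, Finset.mul_sum]
            exact Finset.sum_congr rfl fun i _ => (Finset.mul_sum _ _ _).symm
  -- cast identities
  have hnR : (1:ℝ) < (n:ℝ) := by exact_mod_cast by omega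
  have hchoose_pos : (0:ℝ) < (n.choose m : ℝ) := by
    exact_mod_cast Nat.choose_pos hmn
  have hidA : (n:ℝ) * A = (n.choose m : ℝ) * m := by
    rw [hA]
    exact_mod_cast avg_var_nat_id n m hm1 hmn
  have hidB : ((n:ℝ) - 1) * B = A * ((m:ℝ) - 1) := by
    rcases lt_or_ge 1 m with hm2 | hm2
    · rw [hB, if_pos hm2, hA]
      have h := avg_var_nat_id (n-1) (m-1) (by omega) (by omega)
      have e1 : n - 1 - 1 = n - 2 := by omega
      have e2 : m - 1 - 1 = m - 2 := by omega
      rw [e1, e2] at h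
      have := congrArg (fun x : ℕ => (x : ℝ)) h
      push_cast [Nat.cast_sub (by omega : 1 ≤ n), Nat.cast_sub (by omega : 1 ≤ m)] at this ⊢
      linarith
    · have hm1' : m = 1 := le_antisymm hm2 hm1
      subst hm1'
      rw [hB, if_neg (by omega)]
      simp
  -- final algebra
  rw [ge_iff_le, ← sub_nonneg, hnum]
  have hne1 : ((n:ℝ) - 1) ≠ 0 := by linarith
  have hne2 : (n:ℝ) ≠ 0 := by linarith
  have hne3 : (n.choose m : ℝ) ≠ 0 := ne_of_gt hchoose_pos
  have expand : (A * S + B * T) / (n.choose m : ℝ)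
        - (m:ℝ) * (((n:ℝ) - m) / ((n:ℝ) - 1)) * (S / n)
      = ((A * S + B * T) * (((n:ℝ) - 1) * n) - (m:ℝ) * ((n:ℝ) - m) * S * (n.choose m : ℝ))
        / ((n.choose m : ℝ) * (((n:ℝ) - 1) * n)) := by
    field_simp
  rw [expand]
  have hden : (0:ℝ) < (n.choose m : ℝ) * (((n:ℝ) - 1) * n) :=
    mul_pos hchoose_pos (mul_pos (by linarith) (by linarith))
  apply div_nonneg _ hden.le
  have key : (A * S + B * T) * (((n:ℝ) - 1) * n) - (m:ℝ) * ((n:ℝ) - m) * S * (n.choose m : ℝ)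
      = (n:ℝ) * A * ((m:ℝ) - 1) * (S + T) := by
    linear_combination (((n:ℝ) - m) * S) * hidA + ((n:ℝ) * T) * hidB
  rw [key]
  have hm1R : (0:ℝ) ≤ (m:ℝ) - 1 := by
    have : (1:ℝ) ≤ (m:ℝ) := by exact_mod_cast hm1
    linarith
  exact mul_nonneg (mul_nonneg (mul_nonneg (by positivity) hA0) hm1R) hST
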